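/- Let w ∈ 𝔖_d and let j ∈ Ī^{ᾱ} be an unordered sequence and i = w(j) be well-ordered, where ᾱ = φ(α). Then there exists an index r ∈ [1,d̄] such that i_r ∈ Ī₁ and w⁻¹(r+1) < w⁻¹(r); consequently w has a reduced expression beginning with s_r, i.e. ℓ(s_r w) = ℓ(w) - 1. -/

import Mathlib

/-- Membership in Ī₁. -/
def isB1 {I0 I1 : Type} : (I0 ⊕ I1 ⊕ I1) → Bool
  | Sum.inr (Sum.inl _) => true
  | _ => false

/-- Membership in Ī₂. -/
def isB2 {I0 I1 : Type} : (I0 ⊕ I1 ⊕ I1) → Bool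
  | Sum.inr (Sum.inr _) => true
  | _ => false

/-- The number of inversions of a permutation of Fin n (the Coxeter length). -/
def lenPerm {n : ℕ} (w : Equiv.Perm (Fin n)) : ℕ :=
  (Finset.univ.filter fun p : Fin n × Fin n => p.1 < p.2 ∧ w p.2 < w p.1).card

lemma isB1_iff {I0 I1 : Type} (z : I0 ⊕ I1 ⊕ I1) :
    isB1 z = true ↔ ∃ i1 : I1, z = Sum.inr (Sum.inl i1) := by
  rcases z with a | b | c <;> simp [isB1]

lemma isB2_iff {I0 I1 : Type} (z : I0 ⊕ I1 ⊕ I1) :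
    isB2 z = true ↔ ∃ i1 : I1, z = Sum.inr (Sum.inr i1) := by
  rcases z with a | b | c <;> simp [isB2]

/-- Length decreases when left-multiplying by an adjacent transposition that
undoes an inversion. -/
lemma lenPerm_swap {n : ℕ} (w : Equiv.Perm (Fin n)) (r : ℕ) (h1 : r + 1 < n)
    (hlt : w⁻¹ ⟨r + 1, h1⟩ < w⁻¹ ⟨r, by omega⟩) :
    lenPerm (Equiv.swap (⟨r, by omega⟩ : Fin n) ⟨r + 1, h1⟩ * w) + 1 = lenPerm w := by
  set x : Fin n := ⟨r, by omega⟩ with hx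
  set y : Fin n := ⟨r + 1, h1⟩ with hy
  set s := Equiv.swap x y with hsdef
  set a := w⁻¹ y with hadef
  set b := w⁻¹ x with hbdef
  have hab : (a : ℕ) < (b : ℕ) := hlt
  have hxy : x ≠ y := by simp [hx, hy, Fin.ext_iff]
  have hwb : w b = x := Equiv.apply_symm_apply w x
  have hwa : w a = y := Equiv.apply_symm_apply w y
  have hs : ∀ z : Fin n, (s z = z ∧ z ≠ x ∧ z ≠ y) ∨ (z = x ∧ s z = y) ∨ (z = y ∧ s z = x) := by
    intro z
    by_cases hzx : z = x
    · exact Or.inr (Or.inl ⟨hzx, by rw [hzx, hsdef]; exact Equiv.swap_apply_left x y⟩)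
    · by_cases hzy : z = y
      · exact Or.inr (Or.inr ⟨hzy, by rw [hzy, hsdef]; exact Equiv.swap_apply_right x y⟩)
      · exact Or.inl ⟨Equiv.swap_apply_of_ne_of_ne hzx hzy, hzx, hzy⟩
  have hnot : (a, b) ∉ Finset.univ.filter
      (fun p : Fin n × Fin n => p.1 < p.2 ∧ (s * w) p.2 < (s * w) p.1) := by
    simp only [Finset.mem_filter]
    simp only [Finset.mem_filter, Finset.mem_univ, true_and, Equiv.Perm.mul_apply, not_and]
    intro _
    rw [hwb, hwa, hsdef, Equiv.swap_apply_left, Equiv.swap_apply_right]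
    simp [hx, hy, Fin.lt_def]
  have hins : (Finset.univ.filter fun p : Fin n × Fin n => p.1 < p.2 ∧ w p.2 < w p.1)
      = insert (a, b) (Finset.univ.filter
        (fun p : Fin n × Fin n => p.1 < p.2 ∧ (s * w) p.2 < (s * w) p.1)) := by
    ext p
    simp only [Finset.mem_filter, Finset.mem_insert]
    simp only [Finset.mem_filter, Finset.mem_univ, true_and, Finset.mem_insert,
      Equiv.Perm.mul_apply, Prod.ext_iff]
    set u := w p.1 with hu
    set v := w p.2 with hv
    have Hu : ((s u : Fin n) : ℕ) = (u : ℕ) ∧ (u : ℕ) ≠ r ∧ (u : ℕ) ≠ r + 1 ∨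
        (u : ℕ) = r ∧ ((s u : Fin n) : ℕ) = r + 1 ∨
        (u : ℕ) = r + 1 ∧ ((s u : Fin n) : ℕ) = r := by
      rcases hs u with ⟨e1, e2, e3⟩ | ⟨e1, e2⟩ | ⟨e1, e2⟩
      · exact Or.inl ⟨congrArg Fin.val e1, fun hh => e2 (Fin.ext hh), fun hh => e3 (Fin.ext hh)⟩
      · exact Or.inr (Or.inl ⟨congrArg Fin.val e1, congrArg Fin.val e2⟩)
      · exact Or.inr (Or.inr ⟨congrArg Fin.val e1, congrArg Fin.val e2⟩)
    have Hv : ((s v : Fin n) : ℕ) = (v : ℕ) ∧ (v : ℕ) ≠ r ∧ (v : ℕ) ≠ r + 1 ∨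
        (v : ℕ) = r ∧ ((s v : Fin n) : ℕ) = r + 1 ∨
        (v : ℕ) = r + 1 ∧ ((s v : Fin n) : ℕ) = r := by
      rcases hs v with ⟨e1, e2, e3⟩ | ⟨e1, e2⟩ | ⟨e1, e2⟩
      · exact Or.inl ⟨congrArg Fin.val e1, fun hh => e2 (Fin.ext hh), fun hh => e3 (Fin.ext hh)⟩
      · exact Or.inr (Or.inl ⟨congrArg Fin.val e1, congrArg Fin.val e2⟩)
      · exact Or.inr (Or.inr ⟨congrArg Fin.val e1, congrArg Fin.val e2⟩)
    have key : ∀ (z : Fin n) (c : Fin n), w c = z →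
        (∀ q : Fin n, ((u : ℕ) = (z : ℕ) ↔ (p.1 : ℕ) = (c : ℕ))) := by
      intro z c hc q
      constructor
      · intro h
        have : w p.1 = w c := by rw [hc]; exact Fin.ext h
        exact congrArg Fin.val (w.injective this)
      · intro h
        have : p.1 = c := Fin.ext h
        rw [hu, this, hc]
    have e1 : (u : ℕ) = r ↔ (p.1 : ℕ) = (b : ℕ) := by
      constructor
      · intro h
        have : w p.1 = w b := by rw [hwb]; exact Fin.ext h
        exact congrArg Fin.val (w.injective this)
      · intro h
        have : p.1 = b := Fin.ext h
        rw [hu, this, hwb]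
    have e2 : (u : ℕ) = r + 1 ↔ (p.1 : ℕ) = (a : ℕ) := by
      constructor
      · intro h
        have : w p.1 = w a := by rw [hwa]; exact Fin.ext h
        exact congrArg Fin.val (w.injective this)
      · intro h
        have : p.1 = a := Fin.ext h
        rw [hu, this, hwa]
    have e3 : (v : ℕ) = r ↔ (p.2 : ℕ) = (b : ℕ) := by
      constructor
      · intro h
        have : w p.2 = w b := by rw [hwb]; exact Fin.ext h
        exact congrArg Fin.val (w.injective this)
      · intro h
        have : p.2 = b := Fin.ext h
        rw [hv, this, hwb]
    have e4 : (v : ℕ) = r + 1 ↔ (p.2 : ℕ) = (a : ℕ) := by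
      constructor
      · intro h
        have : w p.2 = w a := by rw [hwa]; exact Fin.ext h
        exact congrArg Fin.val (w.injective this)
      · intro h
        have : p.2 = a := Fin.ext h
        rw [hv, this, hwa]
    have e5 : (u : ℕ) = (v : ℕ) → (p.1 : ℕ) = (p.2 : ℕ) := by
      intro h
      exact congrArg Fin.val (w.injective (Fin.ext h))
    simp only [Fin.lt_def, Fin.ext_iff]
    omega
  have hcard : lenPerm w = lenPerm (s * w) + 1 := by
    unfold lenPerm
    rw [hins, Finset.card_insert_of_notMem hnot]
  omega

theorem stmt19 (I0 I1 : Type) [DecidableEq I0] [DecidableEq I1]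
    (n : ℕ) (jseq iseq : Fin n → (I0 ⊕ I1 ⊕ I1)) (w : Equiv.Perm (Fin n))
    (hw : ∀ a, iseq (w a) = jseq a)
    (hcount : ∀ i1 : I1,
      (Finset.univ.filter fun a => iseq a = Sum.inr (Sum.inl i1)).card =
      (Finset.univ.filter fun a => iseq a = Sum.inr (Sum.inr i1)).card)
    (hunord : ∃ r : ℕ,
      (Finset.univ.filter fun a : Fin n => a.val < r ∧ isB1 (jseq a) = true).card <
      (Finset.univ.filter fun a : Fin n => a.val < r ∧ isB2 (jseq a) = true).card)
    (hwo : ∀ (a : Fin n) (i1 : I1), iseq a = Sum.inr (Sum.inl i1) →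
      ∃ h : a.val + 1 < n, iseq ⟨a.val + 1, h⟩ = Sum.inr (Sum.inr i1)) :
    ∃ (r : ℕ) (h1 : r + 1 < n) (i1 : I1),
      iseq ⟨r, by omega⟩ = Sum.inr (Sum.inl i1) ∧
      w⁻¹ ⟨r + 1, h1⟩ < w⁻¹ ⟨r, by omega⟩ ∧
      lenPerm (Equiv.swap (⟨r, by omega⟩ : Fin n) ⟨r + 1, h1⟩ * w) + 1 = lenPerm w := by
  classical
  -- Every Ī₂-entry of i is immediately preceded by an Ī₁-entry.
  have partner : ∀ q : Fin n, isB2 (iseq q) = true →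
      ∃ p : Fin n, (p : ℕ) + 1 = (q : ℕ) ∧ isB1 (iseq p) = true := by
    intro q hq
    obtain ⟨i1, hi1⟩ := (isB2_iff (iseq q)).mp hq
    have surj := Finset.surj_on_of_inj_on_of_card_le
      (s := Finset.univ.filter fun a : Fin n => iseq a = Sum.inr (Sum.inl i1))
      (t := Finset.univ.filter fun a : Fin n => iseq a = Sum.inr (Sum.inr i1))
      (fun p hp => ⟨(p : ℕ) + 1,
        (hwo p i1 (by simpa using (Finset.mem_filter.mp hp).2)).choose⟩)
      (fun p hp => by
        simp only [Finset.mem_filter, Finset.mem_univ, true_and] at hp ⊢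
        exact (hwo p i1 hp).choose_spec)
      (fun p p' hp hp' h => by
        have := congrArg Fin.val h
        simp only at this
        exact Fin.ext (by omega))
      (le_of_eq (hcount i1).symm)
    obtain ⟨p, hp, hq_eq⟩ := surj q (by simp [hi1])
    have hval : (q : ℕ) = (p : ℕ) + 1 := congrArg Fin.val hq_eq
    refine ⟨p, by omega, ?_⟩
    rw [(Finset.mem_filter.mp hp).2]
    rfl
  -- Step 1: existence of the descent.
  have key : ∃ (r : ℕ) (h1 : r + 1 < n) (i1 : I1),
      iseq ⟨r, by omega⟩ = Sum.inr (Sum.inl i1) ∧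
      w⁻¹ ⟨r + 1, h1⟩ < w⁻¹ ⟨r, by omega⟩ := by
    by_contra hcon
    push_neg at hcon
    obtain ⟨m, hm⟩ := hunord
    have hB1 : (Finset.univ.filter fun a : Fin n => a.val < m ∧ isB1 (jseq a) = true).card
        = (Finset.univ.filter fun q : Fin n =>
            ((w⁻¹ q : Fin n) : ℕ) < m ∧ isB1 (iseq q) = true).card := by
      apply Finset.card_bij (fun a _ => w a)
      · intro a ha
        simp only [Finset.mem_filter, Finset.mem_univ, true_and] at ha ⊢
        refine ⟨by simpa using ha.1, by rw [hw]; exact ha.2⟩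
      · intro a _ a' _ h
        exact w.injective h
      · intro q hq
        refine ⟨w⁻¹ q, ?_, by simp⟩
        simp only [Finset.mem_filter, Finset.mem_univ, true_and] at hq ⊢
        refine ⟨hq.1, ?_⟩
        rw [← hw (w⁻¹ q)]
        simpa using hq.2
    have hB2 : (Finset.univ.filter fun a : Fin n => a.val < m ∧ isB2 (jseq a) = true).card
        = (Finset.univ.filter fun q : Fin n =>
            ((w⁻¹ q : Fin n) : ℕ) < m ∧ isB2 (iseq q) = true).card := by
      apply Finset.card_bij (fun a _ => w a)
      · intro a ha
        simp only [Finset.mem_filter, Finset.mem_univ, true_and] at ha ⊢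
        refine ⟨by simpa using ha.1, by rw [hw]; exact ha.2⟩
      · intro a _ a' _ h
        exact w.injective h
      · intro q hq
        refine ⟨w⁻¹ q, ?_, by simp⟩
        simp only [Finset.mem_filter, Finset.mem_univ, true_and] at hq ⊢
        refine ⟨hq.1, ?_⟩
        rw [← hw (w⁻¹ q)]
        simpa using hq.2
    rw [hB1, hB2] at hm
    have hle : (Finset.univ.filter fun q : Fin n =>
            ((w⁻¹ q : Fin n) : ℕ) < m ∧ isB2 (iseq q) = true).card
        ≤ (Finset.univ.filter fun q : Fin n =>
            ((w⁻¹ q : Fin n) : ℕ) < m ∧ isB1 (iseq q) = true).card := by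
      apply Finset.card_le_card_of_injOn
        (fun q : Fin n => (⟨(q : ℕ) - 1, Nat.lt_of_le_of_lt (Nat.sub_le _ _) q.isLt⟩ : Fin n))
      · intro q hq
        simp only [Finset.mem_coe, Finset.mem_filter, Finset.mem_univ, true_and] at hq ⊢
        obtain ⟨p, hp1, hp2⟩ := partner q hq.2
        have hpq : (⟨(q : ℕ) - 1, by omega⟩ : Fin n) = p := Fin.ext (by simp; omega)
        rw [hpq]
        refine ⟨?_, hp2⟩
        obtain ⟨i1, hi1⟩ := (isB1_iff (iseq p)).mp hp2
        have h1 : (p : ℕ) + 1 < n := by omega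
        have hcon' := hcon (p : ℕ) h1 i1 hi1
        have hq_eq : (⟨(p : ℕ) + 1, h1⟩ : Fin n) = q := Fin.ext hp1
        have hle' : (w⁻¹ (⟨(p : ℕ), by omega⟩ : Fin n) : Fin n)
            ≤ w⁻¹ (⟨(p : ℕ) + 1, h1⟩ : Fin n) := hcon'
        have hpe : (⟨(p : ℕ), by omega⟩ : Fin n) = p := Fin.ext rfl
        rw [hpe, hq_eq] at hle'
        calc ((w⁻¹ p : Fin n) : ℕ) ≤ ((w⁻¹ q : Fin n) : ℕ) := hle'
          _ < m := hq.1
      · intro q hq q' hq' h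
        simp only [Finset.coe_filter, Set.mem_setOf_eq] at hq hq'
        obtain ⟨p, hp1, _⟩ := partner q hq.2.2
        obtain ⟨p', hp1', _⟩ := partner q' hq'.2.2
        have := congrArg Fin.val h
        simp only at this
        exact Fin.ext (by omega)
    omega
  -- Step 2: add the length statement.
  obtain ⟨r, h1, i1, hr1, hrlt⟩ := key
  exact ⟨r, h1, i1, hr1, hrlt, lenPerm_swap w r h1 hrlt⟩
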